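/- Let L ≥ 2 and t ≥ 1 be integers, let a, c, g be real numbers, and take the gate parameters ε₁ = ε₂ = b = d = e = f = 0 in the brickwork transfer matrix construction. Set o = gcd(t, L), ℓ = lcm(t, L), and κ = (t/o)·(L/o). Then trace(𝕋^t) = Σ_{n=0}^{o} Σ_{m=0}^{o} binom(o,n)·binom(o,m)·a^{2ℓn − 2κnm}·c^{2ℓm − 2κnm}·g^{2κnm} (all exponents are nonnegative integers since κ·m ≤ ℓ and κ·n ≤ ℓ). -/

import Mathlib

set_option linter.unusedSectionVars false
set_option maxHeartbeats 1000000


open Matrix BigOperators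

/-- The reduced two-site gate `w` with the 9 parameters
`ε₁, ε₂, a, b, c, d, e, f, g`.  The first argument is the output pair,
the second the input pair (both in `{0,1} × {0,1}`), and all remaining
entries vanish. -/
noncomputable def gateW (e1 e2 a b c d e f g : ℝ)
    (r s : Fin 2 × Fin 2) : ℝ :=
  if r = (0, 0) ∧ s = (0, 0) then 1
  else if r = (0, 1) ∧ s = (0, 1) then e1
  else if r = (0, 1) ∧ s = (1, 0) then a
  else if r = (0, 1) ∧ s = (1, 1) then b
  else if r = (1, 0) ∧ s = (0, 1) then c
  else if r = (1, 0) ∧ s = (1, 0) then e2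
  else if r = (1, 0) ∧ s = (1, 1) then d
  else if r = (1, 1) ∧ s = (0, 1) then e
  else if r = (1, 1) ∧ s = (1, 0) then f
  else if r = (1, 1) ∧ s = (1, 1) then g
  else 0

/-- Even half-step of the brickwork circuit: gates on pairs `(2j, 2j+1)`. -/
noncomputable def stepE (L : ℕ) (w : Fin 2 × Fin 2 → Fin 2 × Fin 2 → ℝ) :
    Matrix (ZMod (2 * L) → Fin 2) (ZMod (2 * L) → Fin 2) ℝ :=
  fun s' s => ∏ j ∈ Finset.range L,
    w (s' ((2 * j : ℕ) : ZMod (2 * L)), s' ((2 * j + 1 : ℕ) : ZMod (2 * L)))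
      (s ((2 * j : ℕ) : ZMod (2 * L)), s ((2 * j + 1 : ℕ) : ZMod (2 * L)))

/-- Odd half-step of the brickwork circuit: gates on pairs `(2j+1, 2j+2)`. -/
noncomputable def stepO (L : ℕ) (w : Fin 2 × Fin 2 → Fin 2 × Fin 2 → ℝ) :
    Matrix (ZMod (2 * L) → Fin 2) (ZMod (2 * L) → Fin 2) ℝ :=
  fun s' s => ∏ j ∈ Finset.range L,
    w (s' ((2 * j + 1 : ℕ) : ZMod (2 * L)), s' ((2 * j + 2 : ℕ) : ZMod (2 * L)))
      (s ((2 * j + 1 : ℕ) : ZMod (2 * L)), s ((2 * j + 2 : ℕ) : ZMod (2 * L)))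

/-- The brickwork transfer matrix `𝕋 = O · E`. -/
noncomputable def transferT (L : ℕ) [NeZero (2 * L)]
    (w : Fin 2 × Fin 2 → Fin 2 × Fin 2 → ℝ) :
    Matrix (ZMod (2 * L) → Fin 2) (ZMod (2 * L) → Fin 2) ℝ :=
  stepO L w * stepE L w



/-! ### Generic summation tools -/

section Tools
variable {M : Type*}

lemma aux_periodic_add [AddCommMonoid M] {h : ℕ → M} {o : ℕ} (hper : ∀ n, h (n + o) = h n) :
    ∀ (c x : ℕ), h (x + c * o) = h x := by
  intro c
  induction c with
  | zero => simp
  | succ c ih => intro x; rw [Nat.succ_mul, ← Nat.add_assoc, hper, ih]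

lemma sum_range_periodic [AddCommMonoid M] (h : ℕ → M) (o : ℕ) (hper : ∀ n, h (n + o) = h n)
    (c : ℕ) : ∑ n ∈ Finset.range (c * o), h n = c • ∑ n ∈ Finset.range o, h n := by
  induction c with
  | zero => simp
  | succ c ih =>
    rw [Nat.succ_mul, Finset.sum_range_add, ih, succ_nsmul]
    congr 1
    exact Finset.sum_congr rfl fun x _ => by rw [Nat.add_comm (c*o) x, aux_periodic_add hper]

lemma sum_range_pairs [AddCommMonoid M] (h : ℕ → M) (t : ℕ) :
    ∑ k ∈ Finset.range t, (h (2 * k) + h (2 * k + 1)) = ∑ n ∈ Finset.range (2 * t), h n := by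
  induction t with
  | zero => simp
  | succ t ih =>
    rw [Finset.sum_range_succ, ih, Nat.mul_succ, Finset.sum_range_succ, Finset.sum_range_succ]
    rw [add_assoc]

lemma prod_range_zmod [CommMonoid M] (n : ℕ) [NeZero n] (f : ZMod n → M) :
    ∏ j ∈ Finset.range n, f (j : ZMod n) = ∏ j : ZMod n, f j := by
  refine Finset.prod_nbij' (fun j => (j : ZMod n)) (fun z => z.val) ?_ ?_ ?_ ?_ ?_
  · intro a _; exact Finset.mem_univ _
  · intro z _; exact Finset.mem_range.mpr (ZMod.val_lt z)
  · intro a ha; exact ZMod.val_cast_of_lt (Finset.mem_range.mp ha)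
  · intro z _; exact ZMod.natCast_rightInverse z
  · intro a _; rfl

lemma sum_range_zmod [AddCommMonoid M] (n : ℕ) [NeZero n] (f : ZMod n → M) :
    ∑ j ∈ Finset.range n, f (j : ZMod n) = ∑ j : ZMod n, f j := by
  refine Finset.sum_nbij' (fun j => (j : ZMod n)) (fun z => z.val) ?_ ?_ ?_ ?_ ?_
  · intro a _; exact Finset.mem_univ _
  · intro z _; exact Finset.mem_range.mpr (ZMod.val_lt z)
  · intro a ha; exact ZMod.val_cast_of_lt (Finset.mem_range.mp ha)
  · intro z _; exact ZMod.natCast_rightInverse z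
  · intro a _; rfl

end Tools

/-! ### Even/odd embedding of `ZMod L` into `ZMod (2L)` -/

noncomputable def emb (L : ℕ) (j : ZMod L) : ZMod (2*L) := ((2 * j.val : ℕ) : ZMod (2*L))
noncomputable def rho (L : ℕ) (i : ZMod (2*L)) : ZMod L := ((i.val / 2 : ℕ) : ZMod L)
noncomputable def ee (L : ℕ) (u v : ZMod L → Fin 2) (i : ZMod (2*L)) : Fin 2 :=
  if i.val % 2 = 0 then u (rho L i) else v (rho L i)

section EmbLemmas
variable {L : ℕ} [NeZero L]

lemma emb_natCast (n : ℕ) : ((2*n : ℕ) : ZMod (2*L)) = emb L (n : ZMod L) := by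
  unfold emb
  rw [ZMod.val_natCast]
  exact (ZMod.natCast_eq_natCast_iff _ _ _).mpr ((Nat.mod_modEq n L).symm.mul_left' 2)

lemma val_emb (j : ZMod L) : (emb L j).val = 2 * j.val := by
  haveI : NeZero (2*L) := ⟨by have := NeZero.ne L; omega⟩
  exact ZMod.val_cast_of_lt (by have := ZMod.val_lt j; omega)

lemma val_emb_add_one (j : ZMod L) : (emb L j + 1).val = 2 * j.val + 1 := by
  haveI : NeZero (2*L) := ⟨by have := NeZero.ne L; omega⟩
  have : emb L j + 1 = ((2 * j.val + 1 : ℕ) : ZMod (2*L)) := by push_cast [emb]; ring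
  rw [this]
  exact ZMod.val_cast_of_lt (by have := ZMod.val_lt j; omega)

lemma emb_add (j k : ZMod L) : emb L (j + k) = emb L j + emb L k := by
  have h1 : ((2*(j.val + k.val) : ℕ) : ZMod (2*L)) = emb L j + emb L k := by
    push_cast [emb]; ring
  rw [← h1]
  unfold emb
  refine (ZMod.natCast_eq_natCast_iff _ _ _).mpr ?_
  rw [ZMod.val_add]
  exact (Nat.mod_modEq _ L).mul_left' 2

lemma emb_sub (j k : ZMod L) : emb L (j - k) = emb L j - emb L k := by
  have := emb_add (j - k) k
  rw [sub_add_cancel] at this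
  rw [this]; ring

lemma rho_emb (j : ZMod L) : rho L (emb L j) = j := by
  rw [rho, val_emb, Nat.mul_div_cancel_left _ (by norm_num)]
  exact ZMod.natCast_rightInverse j

lemma rho_emb_add_one (j : ZMod L) : rho L (emb L j + 1) = j := by
  rw [rho, val_emb_add_one]
  rw [show (2 * j.val + 1) / 2 = j.val by omega]
  exact ZMod.natCast_rightInverse j

lemma zmod_decompose (i : ZMod (2*L)) :
    i = emb L (rho L i) ∨ (i = emb L (rho L i) + 1 ∧ i.val % 2 = 1) := by
  haveI : NeZero (2*L) := ⟨by have := NeZero.ne L; omega⟩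
  have hi : ((i.val : ℕ) : ZMod (2*L)) = i := ZMod.natCast_rightInverse i
  rcases Nat.mod_two_eq_zero_or_one i.val with he | ho
  · left
    have h2 : i.val = 2 * (i.val / 2) := by omega
    calc i = ((i.val : ℕ) : ZMod (2*L)) := hi.symm
    _ = ((2 * (i.val / 2) : ℕ) : ZMod (2*L)) := by rw [← h2]
    _ = emb L (((i.val / 2 : ℕ)) : ZMod L) := emb_natCast _
    _ = emb L (rho L i) := rfl
  · right
    refine ⟨?_, ho⟩
    have h2 : i.val = 2 * (i.val / 2) + 1 := by omega
    calc i = ((i.val : ℕ) : ZMod (2*L)) := hi.symm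
    _ = ((2 * (i.val / 2) : ℕ) : ZMod (2*L)) + 1 := by rw [← Nat.cast_add_one, ← h2]
    _ = emb L (((i.val / 2 : ℕ)) : ZMod L) + 1 := by rw [emb_natCast]
    _ = emb L (rho L i) + 1 := rfl

lemma ee_emb (u v : ZMod L → Fin 2) (j : ZMod L) : ee L u v (emb L j) = u j := by
  simp [ee, val_emb, Nat.mul_mod_right, rho_emb]

lemma ee_emb_add_one (u v : ZMod L → Fin 2) (j : ZMod L) : ee L u v (emb L j + 1) = v j := by
  simp [ee, val_emb_add_one, Nat.mul_add_mod, rho_emb_add_one]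

lemma ee_ext {f : ZMod (2*L) → Fin 2} {u v : ZMod L → Fin 2}
    (h1 : ∀ j, f (emb L j) = u j) (h2 : ∀ j, f (emb L j + 1) = v j) : f = ee L u v := by
  funext i
  rcases zmod_decompose i with h | ⟨h, _⟩
  · rw [h, h1, ee_emb]
  · rw [h, h2, ee_emb_add_one]

lemma ee_inj {u v u' v' : ZMod L → Fin 2} (h : ee L u v = ee L u' v') : u = u' ∧ v = v' := by
  constructor
  · funext j
    have := congrFun h (emb L j); rwa [ee_emb, ee_emb] at this
  · funext j
    have := congrFun h (emb L j + 1); rwa [ee_emb_add_one, ee_emb_add_one] at this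

lemma ee_self (s : ZMod (2*L) → Fin 2) :
    s = ee L (fun j => s (emb L j)) (fun j => s (emb L j + 1)) :=
  ee_ext (fun _ => rfl) (fun _ => rfl)

end EmbLemmas

/-! ### Gate structure -/

noncomputable def wt (a c g : ℝ) (p : Fin 2 × Fin 2) : ℝ :=
  a ^ (p.1.val * (1 - p.2.val)) * c ^ ((1 - p.1.val) * p.2.val) * g ^ (p.1.val * p.2.val)

lemma gateW_eq (a c g : ℝ) (r s : Fin 2 × Fin 2) :
    gateW 0 0 a 0 c 0 0 0 g r s = if r = s.swap then wt a c g s else 0 := by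
  obtain ⟨r1, r2⟩ := r; obtain ⟨s1, s2⟩ := s
  fin_cases r1 <;> fin_cases r2 <;> fin_cases s1 <;> fin_cases s2 <;>
    simp [gateW, wt, Prod.ext_iff]

/-! ### Entry formulas for the step matrices -/

section Entry
variable {L : ℕ} [NeZero L] (a c g : ℝ)

lemma stepE_eq (s' s : ZMod (2*L) → Fin 2) :
    stepE L (gateW 0 0 a 0 c 0 0 0 g) s' s =
      if s' = ee L (fun j => s (emb L j + 1)) (fun j => s (emb L j)) then
        ∏ j : ZMod L, wt a c g (s (emb L j), s (emb L j + 1)) else 0 := by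
  have key1 : ∀ j : ℕ, ((2*j+1 : ℕ) : ZMod (2*L)) = emb L (j : ZMod L) + 1 := by
    intro j; rw [show ((2*j+1 : ℕ) : ZMod (2*L)) = ((2*j : ℕ) : ZMod (2*L)) + 1 by push_cast; ring,
      emb_natCast]
  have step1 : stepE L (gateW 0 0 a 0 c 0 0 0 g) s' s =
      ∏ j ∈ Finset.range L,
        (if (s' (emb L (j : ZMod L)), s' (emb L (j : ZMod L) + 1)) =
            (s (emb L (j : ZMod L) + 1), s (emb L (j : ZMod L))) then
          wt a c g (s (emb L (j : ZMod L)), s (emb L (j : ZMod L) + 1)) else 0) := by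
    refine Finset.prod_congr rfl fun j _ => ?_
    rw [gateW_eq, emb_natCast, key1]
    rfl
  rw [step1, prod_range_zmod L (fun k =>
    (if (s' (emb L k), s' (emb L k + 1)) = (s (emb L k + 1), s (emb L k)) then
      wt a c g (s (emb L k), s (emb L k + 1)) else 0))]
  by_cases h : s' = ee L (fun j => s (emb L j + 1)) (fun j => s (emb L j))
  · rw [if_pos h]
    refine Finset.prod_congr rfl fun k _ => ?_
    rw [if_pos]
    subst h
    rw [ee_emb, ee_emb_add_one]
  · rw [if_neg h]
    have hnall : ¬ ∀ k : ZMod L, s' (emb L k) = s (emb L k + 1) ∧ s' (emb L k + 1) = s (emb L k) := by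
      intro hall
      exact h (ee_ext (fun j => (hall j).1) (fun j => (hall j).2))
    obtain ⟨k, hk⟩ := not_forall.mp hnall
    refine Finset.prod_eq_zero (Finset.mem_univ k) ?_
    rw [if_neg]
    exact fun hp => hk ⟨congrArg Prod.fst hp, congrArg Prod.snd hp⟩

lemma stepO_eq (s'' s' : ZMod (2*L) → Fin 2) :
    stepO L (gateW 0 0 a 0 c 0 0 0 g) s'' s' =
      if s'' = ee L (fun k => s' (emb L (k-1) + 1)) (fun k => s' (emb L (k+1))) then
        ∏ j : ZMod L, wt a c g (s' (emb L j + 1), s' (emb L (j+1))) else 0 := by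
  have key1 : ∀ j : ℕ, ((2*j+1 : ℕ) : ZMod (2*L)) = emb L (j : ZMod L) + 1 := by
    intro j; rw [show ((2*j+1 : ℕ) : ZMod (2*L)) = ((2*j : ℕ) : ZMod (2*L)) + 1 by push_cast; ring,
      emb_natCast]
  have key2 : ∀ j : ℕ, ((2*j+2 : ℕ) : ZMod (2*L)) = emb L ((j : ZMod L) + 1) := by
    intro j
    rw [show (2*j+2) = 2*(j+1) by ring, emb_natCast, Nat.cast_add_one]
  have step1 : stepO L (gateW 0 0 a 0 c 0 0 0 g) s'' s' =
      ∏ j ∈ Finset.range L,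
        (if (s'' (emb L (j : ZMod L) + 1), s'' (emb L ((j : ZMod L) + 1))) =
            (s' (emb L ((j : ZMod L) + 1)), s' (emb L (j : ZMod L) + 1)) then
          wt a c g (s' (emb L (j : ZMod L) + 1), s' (emb L ((j : ZMod L) + 1))) else 0) := by
    refine Finset.prod_congr rfl fun j _ => ?_
    rw [gateW_eq, key1, key2]
    rfl
  rw [step1, prod_range_zmod L (fun k =>
    (if (s'' (emb L k + 1), s'' (emb L (k + 1))) = (s' (emb L (k + 1)), s' (emb L k + 1)) then
      wt a c g (s' (emb L k + 1), s' (emb L (k + 1))) else 0))]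
  by_cases h : s'' = ee L (fun k => s' (emb L (k-1) + 1)) (fun k => s' (emb L (k+1)))
  · rw [if_pos h]
    refine Finset.prod_congr rfl fun k _ => ?_
    rw [if_pos]
    subst h
    rw [ee_emb, ee_emb_add_one]
    rw [add_sub_cancel_right]
  · rw [if_neg h]
    have hnall : ¬ ∀ k : ZMod L,
        s'' (emb L k + 1) = s' (emb L (k+1)) ∧ s'' (emb L (k+1)) = s' (emb L k + 1) := by
      intro hall
      refine h (ee_ext (fun j => ?_) (fun j => (hall j).1))
      have := (hall (j-1)).2
      rwa [sub_add_cancel] at this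
    obtain ⟨k, hk⟩ := not_forall.mp hnall
    refine Finset.prod_eq_zero (Finset.mem_univ k) ?_
    rw [if_neg]
    exact fun hp => hk ⟨congrArg Prod.fst hp, congrArg Prod.snd hp⟩

end Entry

/-! ### Transfer matrix structure -/

noncomputable def Tmap (L : ℕ) (s : ZMod (2*L) → Fin 2) : ZMod (2*L) → Fin 2 :=
  ee L (fun k => s (emb L (k-1))) (fun k => s (emb L (k+1) + 1))

noncomputable def Wfun (L : ℕ) [NeZero L] (a c g : ℝ) (s : ZMod (2*L) → Fin 2) : ℝ :=
  (∏ j : ZMod L, wt a c g (s (emb L j), s (emb L j + 1))) *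
  ∏ j : ZMod L, wt a c g (s (emb L j), s (emb L (j+1) + 1))

section Transfer
variable {L : ℕ} [NeZero L] [NeZero (2*L)] (a c g : ℝ)

lemma transferT_eq (s'' s : ZMod (2*L) → Fin 2) :
    transferT L (gateW 0 0 a 0 c 0 0 0 g) s'' s =
      if s'' = Tmap L s then Wfun L a c g s else 0 := by
  rw [transferT, Matrix.mul_apply]
  rw [Finset.sum_eq_single (ee L (fun j => s (emb L j + 1)) (fun j => s (emb L j)))
    (fun b _ hb => by rw [stepE_eq a c g, if_neg hb, mul_zero])
    (fun h => absurd (Finset.mem_univ _) h)]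
  rw [stepE_eq a c g, if_pos rfl, stepO_eq a c g]
  simp only [ee_emb, ee_emb_add_one]
  unfold Tmap Wfun
  by_cases h : s'' = ee L (fun k => s (emb L (k-1))) (fun k => s (emb L (k+1) + 1))
  · rw [if_pos h, if_pos h, mul_comm]
  · rw [if_neg h, if_neg h, zero_mul]

lemma Tmap_ee (u v : ZMod L → Fin 2) :
    Tmap L (ee L u v) = ee L (fun k => u (k-1)) (fun k => v (k+1)) := by
  unfold Tmap
  simp only [ee_emb, ee_emb_add_one]

lemma Tmap_iterate (k : ℕ) (u v : ZMod L → Fin 2) :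
    (Tmap L)^[k] (ee L u v) =
      ee L (fun j => u (j - (k : ZMod L))) (fun j => v (j + (k : ZMod L))) := by
  induction k with
  | zero => simp
  | succ k ih =>
    rw [Function.iterate_succ_apply', ih, Tmap_ee]
    refine congrArg₂ (ee L) ?_ ?_ <;> funext j <;> beta_reduce <;> (apply congrArg) <;>
      push_cast <;> ring

lemma Wfun_ee (u v : ZMod L → Fin 2) :
    Wfun L a c g (ee L u v) =
      (∏ j : ZMod L, wt a c g (u j, v j)) * ∏ j : ZMod L, wt a c g (u j, v (j+1)) := by
  unfold Wfun
  simp only [ee_emb, ee_emb_add_one]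

lemma transferT_pow_apply (t : ℕ) (s' s : ZMod (2*L) → Fin 2) :
    (transferT L (gateW 0 0 a 0 c 0 0 0 g) ^ t) s' s =
      if s' = (Tmap L)^[t] s then
        ∏ k ∈ Finset.range t, Wfun L a c g ((Tmap L)^[k] s) else 0 := by
  induction t generalizing s' s with
  | zero => simp [Matrix.one_apply]; congr
  | succ t ih =>
    rw [pow_succ, Matrix.mul_apply]
    rw [Finset.sum_eq_single (Tmap L s)
      (fun b _ hb => by rw [transferT_eq a c g, if_neg hb, mul_zero])
      (fun h => absurd (Finset.mem_univ _) h)]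
    rw [transferT_eq a c g, if_pos rfl, ih]
    rw [← Function.iterate_succ_apply]
    by_cases h : s' = (Tmap L)^[t+1] s
    · rw [if_pos h, if_pos h, Finset.prod_range_succ']
      have : ∀ k : ℕ, (Tmap L)^[k] (Tmap L s) = (Tmap L)^[k+1] s :=
        fun k => (Function.iterate_succ_apply (Tmap L) k s).symm
      simp only [this, Function.iterate_zero_apply]
    · rw [if_neg h, zero_mul, if_neg h]

lemma trace_formula (t : ℕ) :
    Matrix.trace (transferT L (gateW 0 0 a 0 c 0 0 0 g) ^ t) =
      ∑ u : ZMod L → Fin 2, ∑ v : ZMod L → Fin 2,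
        if (∀ j, u (j + (t : ZMod L)) = u j) ∧ (∀ j, v (j + (t : ZMod L)) = v j) then
          ∏ k ∈ Finset.range t,
            ((∏ j : ZMod L, wt a c g (u (j - (k : ZMod L)), v (j + (k : ZMod L)))) *
             ∏ j : ZMod L, wt a c g (u (j - (k : ZMod L)), v (j + (k : ZMod L) + 1)))
        else 0 := by
  have hbij : Function.Bijective
      (fun p : (ZMod L → Fin 2) × (ZMod L → Fin 2) => ee L p.1 p.2) := by
    constructor
    · intro p q h
      exact Prod.ext (ee_inj h).1 (ee_inj h).2
    · intro s
      exact ⟨(fun j => s (emb L j), fun j => s (emb L j + 1)), (ee_self s).symm⟩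
  rw [Matrix.trace]
  rw [← Fintype.sum_bijective _ hbij _
    (fun s => (transferT L (gateW 0 0 a 0 c 0 0 0 g) ^ t).diag s) (fun p => rfl)]
  rw [Fintype.sum_prod_type]
  refine Finset.sum_congr rfl fun u _ => Finset.sum_congr rfl fun v _ => ?_
  beta_reduce
  rw [Matrix.diag_apply, transferT_pow_apply a c g, Tmap_iterate]
  have hcond : (ee L u v = ee L (fun j => u (j - (t : ZMod L))) (fun j => v (j + (t : ZMod L))))
      ↔ ((∀ j, u (j + (t : ZMod L)) = u j) ∧ (∀ j, v (j + (t : ZMod L)) = v j)) := by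
    constructor
    · intro h
      obtain ⟨h1, h2⟩ := ee_inj h
      constructor
      · intro j
        have hh := congrFun h1 (j + (t : ZMod L))
        simp only [add_sub_cancel_right] at hh
        exact hh
      · intro j
        exact (congrFun h2 j).symm
    · rintro ⟨h1, h2⟩
      have e1 : u = (fun j => u (j - (t : ZMod L))) := by
        funext j
        rw [← h1 (j - (t:ZMod L)), sub_add_cancel]
      have e2 : v = (fun j => v (j + (t : ZMod L))) := by
        funext j
        rw [← h2 j]
      rw [← e1, ← e2]
  by_cases h : (∀ j, u (j + (t : ZMod L)) = u j) ∧ (∀ j, v (j + (t : ZMod L)) = v j)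
  · rw [if_pos (hcond.mpr h), if_pos h]
    refine Finset.prod_congr rfl fun k _ => ?_
    rw [Tmap_iterate, Wfun_ee]
    congr 1
    refine Finset.prod_congr rfl fun j _ => ?_
    rw [add_right_comm]
  · rw [if_neg (fun hc => h (hcond.mp hc)), if_neg h]

end Transfer

section Periodic
variable {L o t : ℕ} [NeZero L] [NeZero o]

lemma periodic_param (hoL : o ∣ L) (hgcd : Nat.gcd t L = o)
    (f : (ZMod L → Fin 2) → ℝ) :
    ∑ u : ZMod L → Fin 2, (if (∀ j, u (j + (t : ZMod L)) = u j) then f u else 0)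
      = ∑ uh : ZMod o → Fin 2, f (uh ∘ (ZMod.castHom hoL (ZMod o))) := by
  classical
  set φ : ZMod L →+* ZMod o := ZMod.castHom hoL (ZMod o) with hφ
  have hφ_natCast : ∀ n : ℕ, φ ((n : ZMod L)) = (n : ZMod o) := fun n => map_natCast φ n
  set ψ : ZMod o → ZMod L := fun r => ((r.val : ℕ) : ZMod L) with hψ
  have hφψ : ∀ r : ZMod o, φ (ψ r) = r := by
    intro r
    rw [hψ]
    simp only [hφ_natCast]
    exact ZMod.natCast_rightInverse r
  have hφval : ∀ j : ZMod L, φ j = ((j.val : ℕ) : ZMod o) := by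
    intro j
    conv_lhs => rw [← ZMod.natCast_rightInverse j]
    exact hφ_natCast j.val
  have hot : o ∣ t := hgcd ▸ Nat.gcd_dvd_left t L
  -- the key: a `t`-periodic u is invariant under adding multiples of o
  have main : ∀ u : ZMod L → Fin 2, (∀ j, u (j + (t : ZMod L)) = u j) →
      ∀ j : ZMod L, u (ψ (φ j)) = u j := by
    intro u hP
    have hinv : ∀ (k : ℕ) (j : ZMod L), u (j + ((k * t : ℕ) : ZMod L)) = u j := by
      intro k
      induction k with
      | zero => simp
      | succ k ih =>
        intro j
        have hc : (((k+1) * t : ℕ) : ZMod L) = ((k*t : ℕ) : ZMod L) + (t : ZMod L) := by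
          push_cast; ring
        rw [hc, ← add_assoc]
        rw [hP (j + ((k*t : ℕ) : ZMod L))]
        exact ih j
    have hmulinv : ∀ (j w : ZMod L), u (j + (t : ZMod L) * w) = u j := by
      intro j w
      have hw : ((w.val : ℕ) : ZMod L) = w := ZMod.natCast_rightInverse w
      have hc : ((w.val * t : ℕ) : ZMod L) = (t : ZMod L) * w := by push_cast [hw]; ring
      rw [← hc]
      exact hinv w.val j
    have hA : ∃ A : ZMod L, (o : ZMod L) = (t : ZMod L) * A := by
      refine ⟨((Nat.gcdA t L : ℤ) : ZMod L), ?_⟩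
      have h := Nat.gcd_eq_gcd_ab t L
      have h2 := congrArg (fun z : ℤ => (z : ZMod L)) h
      push_cast at h2
      rw [ZMod.natCast_self] at h2
      simp only [zero_mul, add_zero] at h2
      rw [hgcd] at h2
      exact h2
    obtain ⟨A, hA⟩ := hA
    have homul : ∀ (j m : ZMod L), u (j + (o : ZMod L) * m) = u j := by
      intro j m
      rw [hA, mul_assoc]
      exact hmulinv j (A * m)
    intro j
    have hjval : ((j.val : ℕ) : ZMod L) = j := ZMod.natCast_rightInverse j
    have hsplit : j.val = j.val % o + o * (j.val / o) := (Nat.mod_add_div j.val o).symm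
    have hj2 : j = (((j.val % o : ℕ)) : ZMod L) + (o : ZMod L) * ((j.val / o : ℕ) : ZMod L) := by
      conv_lhs => rw [← hjval]
      rw [show ((j.val : ℕ) : ZMod L) = (((j.val % o + o * (j.val / o) : ℕ)) : ZMod L) by
        rw [← hsplit]]
      push_cast; ring
    have hpsi : ψ (φ j) = (((j.val % o : ℕ)) : ZMod L) := by
      rw [hφval j, hψ]
      simp only [ZMod.val_natCast]
    rw [hpsi]
    conv_rhs => rw [hj2]
    exact (homul _ _).symm
  rw [← Finset.sum_filter]
  refine Finset.sum_nbij' (fun u => u ∘ ψ) (fun uh => uh ∘ φ) ?_ ?_ ?_ ?_ ?_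
  · intro u _; exact Finset.mem_univ _
  · intro uh _
    refine Finset.mem_filter.mpr ⟨Finset.mem_univ _, fun j => ?_⟩
    show uh (φ (j + (t : ZMod L))) = uh (φ j)
    rw [map_add, hφ_natCast t, (ZMod.natCast_eq_zero_iff t o).mpr hot, add_zero]
  · intro u hu
    funext j
    exact main u (Finset.mem_filter.mp hu).2 j
  · intro uh _
    funext r
    show uh (φ (ψ r)) = uh r
    rw [hφψ]
  · intro u hu
    have : ∀ j, ((u ∘ ψ) ∘ φ) j = u j := fun j => main u (Finset.mem_filter.mp hu).2 j
    exact congrArg f (funext fun j => (this j).symm)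
end Periodic

section PartC
variable {o L : ℕ} [NeZero L] [NeZero o]

def Anum (uh vh : ZMod o → Fin 2) (γ : ZMod o) : ℕ :=
  ∑ r : ZMod o, (uh r).val * (1 - (vh (r + γ)).val)
def Cnum (uh vh : ZMod o → Fin 2) (γ : ZMod o) : ℕ :=
  ∑ r : ZMod o, (1 - (uh r).val) * (vh (r + γ)).val
def Dnum (uh vh : ZMod o → Fin 2) (γ : ZMod o) : ℕ :=
  ∑ r : ZMod o, (uh r).val * (vh (r + γ)).val

lemma sum_comp_phi (hoL : o ∣ L) (h : ZMod o → ℕ) :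
    ∑ j : ZMod L, h (ZMod.castHom hoL (ZMod o) j) = (L / o) * ∑ r : ZMod o, h r := by
  rw [← sum_range_zmod L (fun j => h (ZMod.castHom hoL (ZMod o) j))]
  have h1 : ∀ n : ℕ, h (ZMod.castHom hoL (ZMod o) ((n : ZMod L))) = h ((n : ZMod o)) := by
    intro n; rw [map_natCast]
  simp only [h1]
  have hper : ∀ n : ℕ, h (((n + o : ℕ)) : ZMod o) = h ((n : ZMod o)) := by
    intro n; congr 1; push_cast [ZMod.natCast_self]; ring
  have hL : L = (L / o) * o := (Nat.div_mul_cancel hoL).symm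
  conv_lhs => rw [hL]
  rw [sum_range_periodic _ o hper, smul_eq_mul, sum_range_zmod]

lemma sum_shift_pair (uh vh : ZMod o → Fin 2) (f : Fin 2 → Fin 2 → ℕ) (α β : ZMod o) :
    ∑ r : ZMod o, f (uh (r + α)) (vh (r + β)) =
      ∑ p : ZMod o, f (uh (p + α)) (vh (p + α + (β - α))) := by
  refine Finset.sum_congr rfl fun p _ => ?_
  congr 1
  ring

lemma sum_shift_pair' (uh vh : ZMod o → Fin 2) (f : Fin 2 → Fin 2 → ℕ) (α β : ZMod o) :
    ∑ r : ZMod o, f (uh (r + α)) (vh (r + β)) =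
      ∑ p : ZMod o, f (uh p) (vh (p + (β - α))) := by
  rw [sum_shift_pair uh vh f α β]
  refine Fintype.sum_equiv (Equiv.addRight α) _ _ (fun x => ?_)
  simp only [Equiv.coe_addRight]

lemma prod_wt_shift (hoL : o ∣ L) (a c g : ℝ) (uh vh : ZMod o → Fin 2) (α β : ZMod o) :
    ∏ j : ZMod L, wt a c g (uh (ZMod.castHom hoL (ZMod o) j + α),
        vh (ZMod.castHom hoL (ZMod o) j + β)) =
      a ^ ((L / o) * Anum uh vh (β - α)) * c ^ ((L / o) * Cnum uh vh (β - α)) *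
        g ^ ((L / o) * Dnum uh vh (β - α)) := by
  unfold wt
  rw [Finset.prod_mul_distrib, Finset.prod_mul_distrib]
  rw [Finset.prod_pow_eq_pow_sum, Finset.prod_pow_eq_pow_sum, Finset.prod_pow_eq_pow_sum]
  congr 2
  · rw [sum_comp_phi hoL (fun r => (uh (r + α)).val * (1 - (vh (r + β)).val))]
    rw [sum_shift_pair' uh vh (fun x y => x.val * (1 - y.val)) α β]
    rfl
  · rw [sum_comp_phi hoL (fun r => (1 - (uh (r + α)).val) * (vh (r + β)).val)]
    rw [sum_shift_pair' uh vh (fun x y => (1 - x.val) * y.val) α β]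
    rfl
  · rw [sum_comp_phi hoL (fun r => (uh (r + α)).val * (vh (r + β)).val)]
    rw [sum_shift_pair' uh vh (fun x y => x.val * y.val) α β]
    rfl

lemma sum_Anum (uh vh : ZMod o → Fin 2) :
    ∑ γ : ZMod o, Anum uh vh γ =
      (∑ r : ZMod o, (uh r).val) * (∑ r : ZMod o, (1 - (vh r).val)) := by
  unfold Anum
  rw [Finset.sum_comm, Finset.sum_mul]
  refine Finset.sum_congr rfl fun r _ => ?_
  rw [← Finset.mul_sum]
  congr 1
  exact Fintype.sum_equiv (Equiv.addLeft r) _ _ (fun γ => by simp)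

lemma sum_Cnum (uh vh : ZMod o → Fin 2) :
    ∑ γ : ZMod o, Cnum uh vh γ =
      (∑ r : ZMod o, (1 - (uh r).val)) * (∑ r : ZMod o, (vh r).val) := by
  unfold Cnum
  rw [Finset.sum_comm, Finset.sum_mul]
  refine Finset.sum_congr rfl fun r _ => ?_
  rw [← Finset.mul_sum]
  congr 1
  exact Fintype.sum_equiv (Equiv.addLeft r) _ _ (fun γ => by simp)

lemma sum_Dnum (uh vh : ZMod o → Fin 2) :
    ∑ γ : ZMod o, Dnum uh vh γ =
      (∑ r : ZMod o, (uh r).val) * (∑ r : ZMod o, (vh r).val) := by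
  unfold Dnum
  rw [Finset.sum_comm, Finset.sum_mul]
  refine Finset.sum_congr rfl fun r _ => ?_
  rw [← Finset.mul_sum]
  congr 1
  exact Fintype.sum_equiv (Equiv.addLeft r) _ _ (fun γ => by simp)

lemma sum_compl (vh : ZMod o → Fin 2) :
    (∑ r : ZMod o, (1 - (vh r).val)) + (∑ r : ZMod o, (vh r).val) = o := by
  rw [← Finset.sum_add_distrib]
  have : ∀ r : ZMod o, (1 - (vh r).val) + (vh r).val = 1 := by
    intro r; have := (vh r).isLt; omega
  simp only [this]
  rw [Finset.sum_const, Finset.card_univ, ZMod.card, smul_eq_mul, mul_one]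

lemma sum_fin2_binom (G : ℕ → ℝ) :
    ∑ uh : ZMod o → Fin 2, G (∑ r : ZMod o, (uh r).val) =
      ∑ n ∈ Finset.range (o + 1), (Nat.choose o n : ℝ) * G n := by
  classical
  have hval : ∀ x : Fin 2, (x.val : ℕ) = if x = 1 then 1 else 0 := by decide
  have hzero : ∀ x : Fin 2, x ≠ 1 → x = 0 := by decide
  have hcard : ∀ uh : ZMod o → Fin 2,
      (∑ r : ZMod o, (uh r).val) = (Finset.univ.filter (fun r => uh r = 1)).card := by
    intro uh
    rw [Finset.card_filter]
    exact Finset.sum_congr rfl fun r _ => hval (uh r)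
  have step1 : ∑ uh : ZMod o → Fin 2, G (∑ r : ZMod o, (uh r).val) =
      ∑ S : Finset (ZMod o), G S.card := by
    refine Finset.sum_nbij' (fun uh => Finset.univ.filter (fun r => uh r = 1))
      (fun S => fun r => if r ∈ S then 1 else 0) ?_ ?_ ?_ ?_ ?_
    · intro _ _; exact Finset.mem_univ _
    · intro _ _; exact Finset.mem_univ _
    · intro uh _
      funext r
      by_cases h : uh r = 1
      · simp [h]
      · simp [h, hzero _ h]
    · intro S _
      ext r
      by_cases h : r ∈ S <;> simp [h]
    · intro uh _
      rw [hcard]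
  rw [step1]
  rw [← Finset.powerset_univ, Finset.sum_powerset]
  have hco : (Finset.univ : Finset (ZMod o)).card = o := by
    rw [Finset.card_univ, ZMod.card]
  rw [hco]
  refine Finset.sum_congr rfl fun n hn => ?_
  have hconst : ∀ S ∈ Finset.powersetCard n (Finset.univ : Finset (ZMod o)),
      G S.card = G n := by
    intro S hS
    rw [(Finset.mem_powersetCard.mp hS).2]
  rw [Finset.sum_congr rfl hconst, Finset.sum_const, Finset.card_powersetCard, hco,
    nsmul_eq_mul]

end PartC

section Eval
variable {o L t : ℕ} [NeZero L] [NeZero o]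

lemma product_eval (hoL : o ∣ L) (hot : o ∣ t) (a c g : ℝ) (uh vh : ZMod o → Fin 2) :
    ∏ k ∈ Finset.range t,
      ((∏ j : ZMod L, wt a c g ((uh ∘ (ZMod.castHom hoL (ZMod o))) (j - (k : ZMod L)),
          (vh ∘ (ZMod.castHom hoL (ZMod o))) (j + (k : ZMod L)))) *
       ∏ j : ZMod L, wt a c g ((uh ∘ (ZMod.castHom hoL (ZMod o))) (j - (k : ZMod L)),
          (vh ∘ (ZMod.castHom hoL (ZMod o))) (j + (k : ZMod L) + 1)))
    = a ^ ((L/o) * (2*(t/o) * ((∑ r : ZMod o, (uh r).val) * (∑ r : ZMod o, (1 - (vh r).val))))) *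
      c ^ ((L/o) * (2*(t/o) * ((∑ r : ZMod o, (1 - (uh r).val)) * (∑ r : ZMod o, (vh r).val)))) *
      g ^ ((L/o) * (2*(t/o) * ((∑ r : ZMod o, (uh r).val) * (∑ r : ZMod o, (vh r).val)))) := by
  set φ := ZMod.castHom hoL (ZMod o) with hφ
  set d := L / o with hd
  have hterm : ∀ k : ℕ,
      ((∏ j : ZMod L, wt a c g ((uh ∘ φ) (j - (k : ZMod L)), (vh ∘ φ) (j + (k : ZMod L)))) *
       ∏ j : ZMod L, wt a c g ((uh ∘ φ) (j - (k : ZMod L)), (vh ∘ φ) (j + (k : ZMod L) + 1)))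
      = a ^ (d * (Anum uh vh ((2*k : ℕ) : ZMod o) + Anum uh vh ((2*k+1 : ℕ) : ZMod o))) *
        c ^ (d * (Cnum uh vh ((2*k : ℕ) : ZMod o) + Cnum uh vh ((2*k+1 : ℕ) : ZMod o))) *
        g ^ (d * (Dnum uh vh ((2*k : ℕ) : ZMod o) + Dnum uh vh ((2*k+1 : ℕ) : ZMod o))) := by
    intro k
    have h1 : ∀ j : ZMod L, (uh ∘ φ) (j - (k : ZMod L)) = uh (φ j + (-(k : ZMod o))) := by
      intro j
      show uh (φ (j - (k : ZMod L))) = _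
      rw [map_sub, map_natCast, sub_eq_add_neg]
    have h2 : ∀ j : ZMod L, (vh ∘ φ) (j + (k : ZMod L)) = vh (φ j + (k : ZMod o)) := by
      intro j
      show vh (φ (j + (k : ZMod L))) = _
      rw [map_add, map_natCast]
    have h3 : ∀ j : ZMod L, (vh ∘ φ) (j + (k : ZMod L) + 1) = vh (φ j + ((k : ZMod o) + 1)) := by
      intro j
      show vh (φ (j + (k : ZMod L) + 1)) = _
      rw [map_add, map_add, map_natCast, _root_.map_one, add_assoc]
    simp only [h1, h2, h3]
    rw [prod_wt_shift hoL a c g uh vh (-(k : ZMod o)) ((k : ZMod o)),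
        prod_wt_shift hoL a c g uh vh (-(k : ZMod o)) ((k : ZMod o) + 1)]
    rw [show (k : ZMod o) - -(k : ZMod o) = ((2*k : ℕ) : ZMod o) by push_cast; ring,
        show ((k : ZMod o) + 1) - -(k : ZMod o) = ((2*k+1 : ℕ) : ZMod o) by push_cast; ring]
    rw [Nat.mul_add d, Nat.mul_add d, Nat.mul_add d, pow_add, pow_add, pow_add]
    ring
  rw [Finset.prod_congr rfl (fun k _ => hterm k)]
  rw [Finset.prod_mul_distrib, Finset.prod_mul_distrib,
    Finset.prod_pow_eq_pow_sum, Finset.prod_pow_eq_pow_sum, Finset.prod_pow_eq_pow_sum]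
  have key : ∀ W : ZMod o → ℕ,
      ∑ k ∈ Finset.range t, (d * (W ((2*k : ℕ) : ZMod o) + W ((2*k+1 : ℕ) : ZMod o)))
        = d * (2*(t/o) * ∑ γ : ZMod o, W γ) := by
    intro W
    rw [← Finset.mul_sum]
    congr 1
    have hper : ∀ n : ℕ, (fun n : ℕ => W ((n : ZMod o))) (n + o) = (fun n : ℕ => W ((n : ZMod o))) n := by
      intro n; simp only []; congr 1; push_cast [ZMod.natCast_self]; ring
    have h2t : 2 * t = (2 * (t/o)) * o := by
      obtain ⟨t', rfl⟩ := hot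
      rw [Nat.mul_div_cancel_left t' (Nat.pos_of_ne_zero (NeZero.ne o))]
      ring
    calc ∑ k ∈ Finset.range t, (W ((2*k : ℕ) : ZMod o) + W ((2*k+1 : ℕ) : ZMod o))
        = ∑ n ∈ Finset.range (2*t), W ((n : ZMod o)) := sum_range_pairs (fun n => W ((n : ZMod o))) t
      _ = (2*(t/o)) • ∑ n ∈ Finset.range o, W ((n : ZMod o)) := by
          rw [h2t]; exact sum_range_periodic _ o hper _
      _ = 2*(t/o) * ∑ γ : ZMod o, W γ := by rw [smul_eq_mul, sum_range_zmod]
  rw [key, key, key, sum_Anum, sum_Cnum, sum_Dnum]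

end Eval



/-- for gate parameters `ε₁ = ε₂ = b = d = e = f = 0`,
with `o = gcd(t, L)`, `ℓ = lcm(t, L)` and `κ = (t/o)(L/o)`,
`trace(𝕋^t) = Σ_{n,m=0}^{o} C(o,n) C(o,m) a^{2ℓn − 2κnm} c^{2ℓm − 2κnm} g^{2κnm}`. -/
theorem stmt17 (L t : ℕ) [NeZero (2 * L)] (hL : 2 ≤ L) (ht : 1 ≤ t) (a c g : ℝ) :
    Matrix.trace (transferT L (gateW 0 0 a 0 c 0 0 0 g) ^ t) =
      ∑ n ∈ Finset.range (Nat.gcd t L + 1), ∑ m ∈ Finset.range (Nat.gcd t L + 1),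
        (Nat.choose (Nat.gcd t L) n : ℝ) * (Nat.choose (Nat.gcd t L) m : ℝ) *
          a ^ (2 * Nat.lcm t L * n - 2 * ((t / Nat.gcd t L) * (L / Nat.gcd t L)) * n * m) *
          c ^ (2 * Nat.lcm t L * m - 2 * ((t / Nat.gcd t L) * (L / Nat.gcd t L)) * n * m) *
          g ^ (2 * ((t / Nat.gcd t L) * (L / Nat.gcd t L)) * n * m) := by
  haveI hNL : NeZero L := ⟨by omega⟩
  have ho0 : 0 < Nat.gcd t L := Nat.gcd_pos_of_pos_left L (by omega)
  haveI : NeZero (Nat.gcd t L) := ⟨by omega⟩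
  set o := Nat.gcd t L with ho
  have hoL : o ∣ L := Nat.gcd_dvd_right t L
  have hot : o ∣ t := Nat.gcd_dvd_left t L
  have hgcd : Nat.gcd t L = o := ho.symm
  set φ := ZMod.castHom hoL (ZMod o) with hφ
  have hκo : ((t/o) * (L/o)) * o = Nat.lcm t L := by
    obtain ⟨t', ht'⟩ := hot
    obtain ⟨L', hL'⟩ := hoL
    have h := Nat.gcd_mul_lcm t L
    rw [← ho] at h
    have hto : t / o = t' := by rw [ht']; exact Nat.mul_div_cancel_left t' ho0
    have hLo : L / o = L' := by rw [hL']; exact Nat.mul_div_cancel_left L' ho0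
    rw [hto, hLo]
    have h2 : o * Nat.lcm t L = o * (t' * L' * o) := by
      rw [h, ht', hL']; ring
    exact (Nat.eq_of_mul_eq_mul_left ho0 h2).symm
  calc Matrix.trace (transferT L (gateW 0 0 a 0 c 0 0 0 g) ^ t)
      = ∑ u : ZMod L → Fin 2, ∑ v : ZMod L → Fin 2,
          if (∀ j, u (j + (t : ZMod L)) = u j) ∧ (∀ j, v (j + (t : ZMod L)) = v j) then
            ∏ k ∈ Finset.range t,
              ((∏ j : ZMod L, wt a c g (u (j - (k : ZMod L)), v (j + (k : ZMod L)))) *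
               ∏ j : ZMod L, wt a c g (u (j - (k : ZMod L)), v (j + (k : ZMod L) + 1)))
          else 0 := trace_formula a c g t
    _ = ∑ u : ZMod L → Fin 2,
          (if (∀ j, u (j + (t : ZMod L)) = u j) then
            (∑ v : ZMod L → Fin 2, if (∀ j, v (j + (t : ZMod L)) = v j) then
              ∏ k ∈ Finset.range t,
                ((∏ j : ZMod L, wt a c g (u (j - (k : ZMod L)), v (j + (k : ZMod L)))) *
                 ∏ j : ZMod L, wt a c g (u (j - (k : ZMod L)), v (j + (k : ZMod L) + 1)))
              else 0)
          else 0) := by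
        refine Finset.sum_congr rfl fun u _ => ?_
        by_cases h : (∀ j, u (j + (t : ZMod L)) = u j) <;> simp [h]
    _ = ∑ uh : ZMod o → Fin 2,
          (∑ v : ZMod L → Fin 2, if (∀ j, v (j + (t : ZMod L)) = v j) then
            ∏ k ∈ Finset.range t,
              ((∏ j : ZMod L, wt a c g ((uh ∘ φ) (j - (k : ZMod L)), v (j + (k : ZMod L)))) *
               ∏ j : ZMod L, wt a c g ((uh ∘ φ) (j - (k : ZMod L)), v (j + (k : ZMod L) + 1)))
            else 0) :=
        periodic_param hoL hgcd _
    _ = ∑ uh : ZMod o → Fin 2, ∑ vh : ZMod o → Fin 2,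
          ∏ k ∈ Finset.range t,
            ((∏ j : ZMod L, wt a c g ((uh ∘ φ) (j - (k : ZMod L)), (vh ∘ φ) (j + (k : ZMod L)))) *
             ∏ j : ZMod L, wt a c g ((uh ∘ φ) (j - (k : ZMod L)), (vh ∘ φ) (j + (k : ZMod L) + 1))) :=
        Finset.sum_congr rfl fun uh _ => periodic_param hoL hgcd _
    _ = ∑ uh : ZMod o → Fin 2, ∑ vh : ZMod o → Fin 2,
          a ^ ((L/o) * (2*(t/o) * ((∑ r : ZMod o, (uh r).val) * (∑ r : ZMod o, (1 - (vh r).val))))) *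
          c ^ ((L/o) * (2*(t/o) * ((∑ r : ZMod o, (1 - (uh r).val)) * (∑ r : ZMod o, (vh r).val)))) *
          g ^ ((L/o) * (2*(t/o) * ((∑ r : ZMod o, (uh r).val) * (∑ r : ZMod o, (vh r).val)))) :=
        Finset.sum_congr rfl fun uh _ => Finset.sum_congr rfl fun vh _ =>
          product_eval hoL hot a c g uh vh
    _ = ∑ uh : ZMod o → Fin 2, ∑ vh : ZMod o → Fin 2,
          a ^ ((L/o) * (2*(t/o) * ((∑ r : ZMod o, (uh r).val) * (o - ∑ r : ZMod o, (vh r).val)))) *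
          c ^ ((L/o) * (2*(t/o) * ((o - ∑ r : ZMod o, (uh r).val) * (∑ r : ZMod o, (vh r).val)))) *
          g ^ ((L/o) * (2*(t/o) * ((∑ r : ZMod o, (uh r).val) * (∑ r : ZMod o, (vh r).val)))) := by
        refine Finset.sum_congr rfl fun uh _ => Finset.sum_congr rfl fun vh _ => ?_
        have hu := sum_compl uh
        have hv := sum_compl vh
        rw [show (∑ r : ZMod o, (1 - (vh r).val)) = o - ∑ r : ZMod o, (vh r).val by omega,
            show (∑ r : ZMod o, (1 - (uh r).val)) = o - ∑ r : ZMod o, (uh r).val by omega]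
    _ = ∑ n ∈ Finset.range (o + 1), (Nat.choose o n : ℝ) *
          ∑ vh : ZMod o → Fin 2,
            a ^ ((L/o) * (2*(t/o) * (n * (o - ∑ r : ZMod o, (vh r).val)))) *
            c ^ ((L/o) * (2*(t/o) * ((o - n) * (∑ r : ZMod o, (vh r).val)))) *
            g ^ ((L/o) * (2*(t/o) * (n * (∑ r : ZMod o, (vh r).val)))) :=
        sum_fin2_binom (fun n => ∑ vh : ZMod o → Fin 2,
          a ^ ((L/o) * (2*(t/o) * (n * (o - ∑ r : ZMod o, (vh r).val)))) *
          c ^ ((L/o) * (2*(t/o) * ((o - n) * (∑ r : ZMod o, (vh r).val)))) *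
          g ^ ((L/o) * (2*(t/o) * (n * (∑ r : ZMod o, (vh r).val)))))
    _ = ∑ n ∈ Finset.range (o + 1), (Nat.choose o n : ℝ) *
          ∑ m ∈ Finset.range (o + 1), (Nat.choose o m : ℝ) *
            (a ^ ((L/o) * (2*(t/o) * (n * (o - m)))) *
             c ^ ((L/o) * (2*(t/o) * ((o - n) * m))) *
             g ^ ((L/o) * (2*(t/o) * (n * m)))) :=
        Finset.sum_congr rfl fun n _ => by
          rw [sum_fin2_binom (fun m => a ^ ((L/o) * (2*(t/o) * (n * (o - m)))) *
            c ^ ((L/o) * (2*(t/o) * ((o - n) * m))) *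
            g ^ ((L/o) * (2*(t/o) * (n * m))))]
    _ = ∑ n ∈ Finset.range (o + 1), ∑ m ∈ Finset.range (o + 1),
          (Nat.choose o n : ℝ) * (Nat.choose o m : ℝ) *
            a ^ (2 * Nat.lcm t L * n - 2 * ((t / o) * (L / o)) * n * m) *
            c ^ (2 * Nat.lcm t L * m - 2 * ((t / o) * (L / o)) * n * m) *
            g ^ (2 * ((t / o) * (L / o)) * n * m) := by
        refine Finset.sum_congr rfl fun n hn => ?_
        rw [Finset.mul_sum]
        refine Finset.sum_congr rfl fun m hm => ?_
        have hn' : n ≤ o := by have := Finset.mem_range.mp hn; omega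
        have hm' : m ≤ o := by have := Finset.mem_range.mp hm; omega
        have ea : (L/o) * (2*(t/o) * (n * (o - m))) =
            2 * Nat.lcm t L * n - 2 * ((t / o) * (L / o)) * n * m := by
          calc (L/o) * (2*(t/o) * (n * (o - m)))
              = (2 * ((t/o) * (L/o)) * n) * (o - m) := by ring
            _ = (2 * ((t/o) * (L/o)) * n) * o - (2 * ((t/o) * (L/o)) * n) * m :=
                Nat.mul_sub _ _ _
            _ = 2 * Nat.lcm t L * n - 2 * ((t / o) * (L / o)) * n * m := by
                rw [show (2 * ((t/o) * (L/o)) * n) * o = 2 * Nat.lcm t L * n from by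
                      rw [← hκo]; ring,
                    show (2 * ((t/o) * (L/o)) * n) * m = 2 * ((t / o) * (L / o)) * n * m from by
                      ring]
        have ec : (L/o) * (2*(t/o) * ((o - n) * m)) =
            2 * Nat.lcm t L * m - 2 * ((t / o) * (L / o)) * n * m := by
          calc (L/o) * (2*(t/o) * ((o - n) * m))
              = (2 * ((t/o) * (L/o)) * m) * (o - n) := by ring
            _ = (2 * ((t/o) * (L/o)) * m) * o - (2 * ((t/o) * (L/o)) * m) * n :=
                Nat.mul_sub _ _ _
            _ = 2 * Nat.lcm t L * m - 2 * ((t / o) * (L / o)) * n * m := by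
                rw [show (2 * ((t/o) * (L/o)) * m) * o = 2 * Nat.lcm t L * m from by
                      rw [← hκo]; ring,
                    show (2 * ((t/o) * (L/o)) * m) * n = 2 * ((t / o) * (L / o)) * n * m from by
                      ring]
        have eg : (L/o) * (2*(t/o) * (n * m)) = 2 * ((t / o) * (L / o)) * n * m := by ring
        rw [ea, ec, eg]
        ring
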